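/- Fix ℓ ≥ 1 and m ≥ 1, and let f₀ : ℕ → ℚ be the sequence with f₀(j) = 0 for 1 ≤ j ≤ ℓ and f₀(j) = 1 for j ≥ ℓ + 1. Then for every n ≥ 1, the m-th invert transform of f₀ satisfies (𝒴^m f₀)(n) = Σ_{k=1}^{⌊(n−1)/ℓ⌋} C(n − ℓk − 1, k − 1) · m^(k−1). (This number counts the words of length n over the alphabet {0, 1, …, m}, starting with 1, in which every nonzero letter is followed by at least ℓ zeros.) -/

import Mathlib

/-- The invert transform of a sequence `x : ℕ → ℚ` (indexed from 1, `x 0` ignored):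
`(𝒴x)(0) = 0` and `(𝒴x)(n) = x n + ∑_{j=1}^{n-1} x j * (𝒴x)(n-j)` for `n ≥ 1`. -/
def invert (x : ℕ → ℚ) : ℕ → ℚ
  | 0 => 0
  | n + 1 => x (n + 1) + ∑ j ∈ Finset.range n, x (j + 1) * invert x (n - j)
  termination_by n => n
  decreasing_by omega

/-- The partial Bell polynomial `B_{n,k}(z₁, z₂, …)`, evaluated at a sequence of rationals
`z` (indexed from 1, `z 0` ignored): the sum over all finitely supported `α : ℕ → ℕ` with
`α 0 = 0`, `∑ i, α i = k` and `∑ i, i * α i = n` of `(n! / ∏ i, (α i)!) * ∏ i (z i / i!)^(α i)`. -/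
def partialBell (n k : ℕ) (z : ℕ → ℚ) : ℚ :=
  ∑ α ∈ ((Finset.range (n + 1)).finsuppAntidiag k).filter
      (fun α => (∑ i ∈ Finset.range (n + 1), i * α i) = n ∧ α 0 = 0),
    ((n.factorial : ℚ) / ∏ i ∈ Finset.range (n + 1), ((α i).factorial : ℚ)) *
      ∏ i ∈ Finset.range (n + 1), (z i / (i.factorial : ℚ)) ^ α i

/-- For `f₀ j = 0` if `1 ≤ j ≤ ℓ` and `1` if `j ≥ ℓ+1`, and `m ≥ 1`:
`(𝒴^m f₀)(n) = ∑_{k=1}^{⌊(n-1)/ℓ⌋} C(n-ℓk-1, k-1) m^(k-1)`,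
which counts words of length `n` over `{0,…,m}` starting with `1` in which every
nonzero letter is followed by at least `ℓ` zeros. -/


def gseq (ℓ m n : ℕ) : ℚ :=
  ∑ k ∈ Finset.Icc 1 ((n - 1) / ℓ),
    ((n - ℓ * k - 1).choose (k - 1) : ℚ) * (m : ℚ) ^ (k - 1)

lemma gseq_zero (ℓ m : ℕ) : gseq ℓ m 0 = 0 := by simp [gseq]

lemma gseq_small (ℓ m n : ℕ) (hℓ : 1 ≤ ℓ) (h : n ≤ ℓ) : gseq ℓ m n = 0 := by
  have : (n - 1) / ℓ = 0 := Nat.div_eq_of_lt (by omega)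
  simp [gseq, this]

lemma gseq_alt (ℓ m n : ℕ) (hℓ : 1 ≤ ℓ) :
    gseq ℓ m n = ∑ k ∈ Finset.Icc 1 (n / (ℓ + 1)),
      ((n - ℓ * k - 1).choose (k - 1) : ℚ) * (m : ℚ) ^ (k - 1) := by
  rw [eq_comm, gseq]
  apply Finset.sum_subset
  · intro k hk
    simp only [Finset.mem_Icc] at hk ⊢
    have h1 : k * (ℓ + 1) ≤ n := (Nat.le_div_iff_mul_le (by omega)).1 hk.2
    have h3 : k * (ℓ + 1) = k * ℓ + k := by ring
    have h4 : k * ℓ ≤ n - 1 := by omega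
    exact ⟨hk.1, (Nat.le_div_iff_mul_le (by omega)).2 h4⟩
  · intro k hk hk2
    simp only [Finset.mem_Icc, not_and, not_le] at hk hk2
    have h1 : k * ℓ ≤ n - 1 := (Nat.le_div_iff_mul_le (by omega)).1 hk.2
    have h2 : n < k * (ℓ + 1) := (Nat.div_lt_iff_lt_mul (by omega)).1 (hk2 hk.1)
    have h3 : k * (ℓ + 1) = k * ℓ + k := by ring
    have hk1 : 1 ≤ k := hk.1
    have h4 : (n - ℓ * k - 1) < k - 1 := by
      have h5 : ℓ * k = k * ℓ := mul_comm _ _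
      have h6 : k ≤ k * ℓ := Nat.le_mul_of_pos_right k (by omega)
      omega
    rw [Nat.choose_eq_zero_of_lt h4]
    simp

lemma gseq_succ_val (ℓ m : ℕ) (hℓ : 1 ≤ ℓ) : gseq ℓ m (ℓ + 1) = 1 := by
  have h1 : (ℓ + 1 - 1) / ℓ = 1 := by rw [Nat.add_sub_cancel, Nat.div_self (by omega)]
  rw [gseq, h1]
  simp

lemma gseq_rec (ℓ m : ℕ) (hℓ : 1 ≤ ℓ) (n : ℕ) :
    gseq ℓ m n = gseq ℓ m (n - 1) + (m : ℚ) * gseq ℓ m (n - (ℓ + 1))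
      + (if n = ℓ + 1 then 1 else 0) := by
  rcases le_or_gt n ℓ with h | h
  · rw [gseq_small ℓ m n hℓ h, gseq_small ℓ m (n-1) hℓ (by omega)]
    have : n - (ℓ + 1) = 0 := by omega
    rw [this, gseq_zero, if_neg (by omega)]
    ring
  rcases eq_or_lt_of_le (Nat.succ_le_of_lt h) with h' | h'
  · -- n = ℓ + 1
    have hn : n = ℓ + 1 := by omega
    subst hn
    rw [gseq_succ_val ℓ m hℓ, gseq_small ℓ m (ℓ + 1 - 1) hℓ (by omega),
      Nat.sub_self, gseq_zero, if_pos rfl]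
    ring
  · -- n ≥ ℓ + 2
    have hn : ℓ + 2 ≤ n := by omega
    rw [if_neg (by omega)]
    set d := ℓ + 1 with hd
    have hdpos : 0 < d := by omega
    set L := n / d with hL
    set L' := (n - 1) / d with hL'
    have hL1 : 1 ≤ L := (Nat.le_div_iff_mul_le hdpos).2 (by omega)
    have hL'1 : 1 ≤ L' := (Nat.le_div_iff_mul_le hdpos).2 (by omega)
    have hLL' : L' ≤ L := Nat.div_le_div_right (by omega)
    have hL'' : (n - d) / d = L - 1 := by
      have : (n - d) / d + 1 = L := by
        rw [hL, ← Nat.add_div_right _ hdpos, Nat.sub_add_cancel (by omega)]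
      omega
    rw [gseq_alt ℓ m n hℓ, gseq_alt ℓ m (n-1) hℓ, gseq_alt ℓ m (n-d) hℓ, ← hL, hL'']
    have hsplit : ∀ N : ℕ, 1 ≤ N → Finset.Icc 1 N = insert 1 (Finset.Icc 2 N) := by
      intro N hN; ext x; simp [Finset.mem_Icc, Finset.mem_insert]; omega
    have h1mem : (1:ℕ) ∉ Finset.Icc 2 L := by simp
    have h1mem' : (1:ℕ) ∉ Finset.Icc 2 L' := by simp
    rw [hsplit L hL1, hsplit L' hL'1]
    rw [Finset.sum_insert h1mem, Finset.sum_insert h1mem']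
    have hfirst : ∀ N : ℕ, ((N - ℓ * 1 - 1).choose (1 - 1) : ℚ) * (m : ℚ) ^ (1 - 1) = 1 := by
      intro N; simp
    rw [hfirst, hfirst]
    -- Pascal on each term of the big sum
    have hterm : ∀ k ∈ Finset.Icc 2 L,
        ((n - ℓ * k - 1).choose (k - 1) : ℚ) * (m : ℚ) ^ (k - 1)
          = ((n - 1 - ℓ * k - 1).choose (k - 1) : ℚ) * (m : ℚ) ^ (k - 1)
            + ((n - ℓ * k - 2).choose (k - 2) : ℚ) * (m : ℚ) ^ (k - 1) := by
      intro k hk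
      simp only [Finset.mem_Icc] at hk
      have hkd : k * d ≤ n := (Nat.le_div_iff_mul_le hdpos).1 hk.2
      have hkd' : k * d = k * ℓ + k := by rw [hd]; ring
      have hml : ℓ * k = k * ℓ := mul_comm _ _
      have h2 : ℓ * k + 2 ≤ n := by omega
      have ha : n - ℓ * k - 1 = (n - ℓ * k - 2) + 1 := by omega
      have hb : k - 1 = (k - 2) + 1 := by omega
      have hc : n - 1 - ℓ * k - 1 = n - ℓ * k - 2 := by omega
      rw [ha, hb, hc, Nat.choose_succ_succ]
      push_cast
      ring
    rw [Finset.sum_congr rfl hterm, Finset.sum_add_distrib]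
    -- first part reduces to the (n-1) sum
    have hA : ∑ k ∈ Finset.Icc 2 L', ((n - 1 - ℓ * k - 1).choose (k - 1) : ℚ) * (m:ℚ) ^ (k-1)
        = ∑ k ∈ Finset.Icc 2 L, ((n - 1 - ℓ * k - 1).choose (k - 1) : ℚ) * (m:ℚ) ^ (k-1) := by
      apply Finset.sum_subset
      · intro k hk; simp only [Finset.mem_Icc] at hk ⊢; omega
      · intro k hk hk2
        simp only [Finset.mem_Icc, not_and, not_le] at hk hk2
        have hkd : k * d ≤ n := (Nat.le_div_iff_mul_le hdpos).1 hk.2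
        have hgt : n - 1 < k * d := by
          have := (Nat.div_lt_iff_lt_mul hdpos).1 (hk2 hk.1)
          omega
        have hkd' : k * d = k * ℓ + k := by rw [hd]; ring
        have hml : ℓ * k = k * ℓ := mul_comm _ _
        have : n - 1 - ℓ * k - 1 < k - 1 := by omega
        rw [Nat.choose_eq_zero_of_lt this]
        simp
    -- second part is m * (the (n-d) sum)
    have hB : ∑ k ∈ Finset.Icc 2 L, ((n - ℓ * k - 2).choose (k - 2) : ℚ) * (m:ℚ) ^ (k-1)
        = (m:ℚ) * ∑ j ∈ Finset.Icc 1 (L - 1),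
            ((n - d - ℓ * j - 1).choose (j - 1) : ℚ) * (m:ℚ) ^ (j-1) := by
      have hmap : Finset.Icc 2 L = Finset.map (addLeftEmbedding 1) (Finset.Icc 1 (L - 1)) := by
        rw [Finset.map_add_left_Icc]
        congr 1
        omega
      rw [hmap, Finset.sum_map, Finset.mul_sum]
      apply Finset.sum_congr rfl
      intro j hj
      simp only [Finset.mem_Icc] at hj
      have hje : (addLeftEmbedding 1) j = 1 + j := rfl
      rw [hje]
      have hjd : j * d ≤ n - d := (Nat.le_div_iff_mul_le hdpos).1 (by omega : j ≤ (n - d)/d)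
      have e1 : ℓ * (1 + j) = ℓ + ℓ * j := by ring
      have e2 : n - ℓ * (1 + j) - 2 = n - d - ℓ * j - 1 := by omega
      have e3 : 1 + j - 2 = j - 1 := by omega
      have e4 : 1 + j - 1 = j := by omega
      rw [e2, e3, e4]
      have e5 : (m:ℚ) ^ j = (m:ℚ) * (m:ℚ) ^ (j - 1) := by
        conv_lhs => rw [show j = (j-1)+1 by omega]
        ring
      rw [e5]; ring
    rw [← hA, hB]
    ring

open PowerSeries in
noncomputable def Fg (ℓ m : ℕ) : PowerSeries ℚ := PowerSeries.mk (gseq ℓ m)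

open PowerSeries in
noncomputable def Pg (ℓ m : ℕ) : PowerSeries ℚ :=
  1 - X - C (m : ℚ) * X ^ (ℓ + 1)

open PowerSeries in
lemma Fg_mul_Pg (ℓ m : ℕ) (hℓ : 1 ≤ ℓ) : Fg ℓ m * Pg ℓ m = X ^ (ℓ + 1) := by
  ext n
  rw [Pg, mul_sub, mul_sub, mul_one]
  rw [map_sub, map_sub]
  rw [show (Fg ℓ m * (C (m:ℚ) * X ^ (ℓ+1))) = C (m:ℚ) * (Fg ℓ m * X ^ (ℓ+1)) by ring]
  rw [PowerSeries.coeff_C_mul]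
  rw [PowerSeries.coeff_X_pow, PowerSeries.coeff_mul_X_pow']
  rw [show (PowerSeries.X : PowerSeries ℚ) = X ^ 1 by rw [pow_one]]
  rw [PowerSeries.coeff_mul_X_pow']
  rw [show (Fg ℓ m) = PowerSeries.mk (gseq ℓ m) from rfl, PowerSeries.coeff_mk]
  have hrec := gseq_rec ℓ m hℓ n
  by_cases h1 : 1 ≤ n
  · rw [if_pos h1, PowerSeries.coeff_mk]
    by_cases h2 : ℓ + 1 ≤ n
    · rw [if_pos h2, PowerSeries.coeff_mk]
      by_cases h3 : n = ℓ + 1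
      · rw [if_pos h3]; rw [if_pos h3] at hrec; linarith
      · rw [if_neg h3]; rw [if_neg h3] at hrec; linarith
    · rw [if_neg h2, if_neg (by omega)]
      rw [if_neg (by omega), show n - (ℓ+1) = 0 by omega, gseq_zero] at hrec
      linarith
  · rw [if_neg h1, if_neg (by omega), if_neg (by omega)]
    have hn0 : n = 0 := by omega
    subst hn0
    rw [gseq_zero]
    ring

open PowerSeries in
lemma Pg_ne_zero (ℓ m : ℕ) (hℓ : 1 ≤ ℓ) : Pg ℓ m ≠ 0 := by
  intro h
  have := congrArg (PowerSeries.constantCoeff (R := ℚ)) h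
  rw [Pg] at this
  simp [PowerSeries.constantCoeff_X, zero_pow (by omega : ℓ + 1 ≠ 0)] at this

open PowerSeries in
lemma Fg_succ (ℓ m : ℕ) (hℓ : 1 ≤ ℓ) :
    Fg ℓ (m + 1) = Fg ℓ m + Fg ℓ m * Fg ℓ (m + 1) := by
  have h1 := Fg_mul_Pg ℓ m hℓ
  have h2 := Fg_mul_Pg ℓ (m + 1) hℓ
  have hP : Pg ℓ (m + 1) = Pg ℓ m - X ^ (ℓ + 1) := by
    rw [Pg, Pg]
    have : ((m + 1 : ℕ) : ℚ) = (m : ℚ) + 1 := by push_cast; ring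
    rw [this, map_add, map_one]
    ring
  have key : (Fg ℓ (m+1) - Fg ℓ m - Fg ℓ m * Fg ℓ (m+1)) * Pg ℓ (m+1) = 0 := by
    rw [hP] at h2 ⊢
    linear_combination (1 - Fg ℓ m) * h2 - h1
  rcases mul_eq_zero.1 key with h | h
  · linear_combination h
  · exact absurd h (Pg_ne_zero ℓ (m+1) hℓ)

lemma gseq_conv (ℓ m : ℕ) (hℓ : 1 ≤ ℓ) (n : ℕ) :
    gseq ℓ (m + 1) (n + 1) = gseq ℓ m (n + 1)
      + ∑ j ∈ Finset.range n, gseq ℓ m (j + 1) * gseq ℓ (m + 1) (n - j) := by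
  have h := congrArg (PowerSeries.coeff (R := ℚ) (n + 1)) (Fg_succ ℓ m hℓ)
  rw [map_add, PowerSeries.coeff_mul, Finset.Nat.sum_antidiagonal_eq_sum_range_succ_mk] at h
  simp only [Fg, PowerSeries.coeff_mk] at h
  rw [h]
  congr 1
  rw [Finset.sum_range_succ', Finset.sum_range_succ]
  rw [gseq_zero, show n + 1 - 0 = n + 1 from rfl]
  rw [show n + 1 - (n + 1) = 0 by omega, gseq_zero]
  simp only [mul_zero, zero_mul, add_zero]
  apply Finset.sum_congr rfl
  intro j hj
  have : n + 1 - (j + 1) = n - j := by omega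
  rw [this]

lemma gseq_base (ℓ : ℕ) (hℓ : 1 ≤ ℓ) (n : ℕ) (hn : 1 ≤ n) :
    gseq ℓ 0 n = if ℓ + 1 ≤ n then 1 else 0 := by
  by_cases h : ℓ + 1 ≤ n
  · rw [if_pos h, gseq]
    have hK : 1 ≤ (n - 1) / ℓ := (Nat.le_div_iff_mul_le (by omega)).2 (by omega)
    rw [Finset.sum_eq_single 1]
    · simp
    · intro k hk hk1
      simp only [Finset.mem_Icc] at hk
      have : (0 : ℚ) ^ (k - 1) = 0 := by
        apply zero_pow
        omega
      rw [Nat.cast_zero, this, mul_zero]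
    · intro h1
      exact absurd (Finset.mem_Icc.2 ⟨le_refl 1, hK⟩) h1
  · rw [if_neg h, gseq_small ℓ 0 n hℓ (by omega)]

lemma invert_gseq (ℓ i : ℕ) (hℓ : 1 ≤ ℓ) (x : ℕ → ℚ)
    (hx : ∀ j, 1 ≤ j → x j = gseq ℓ i j) :
    ∀ n, invert x n = gseq ℓ (i + 1) n := by
  intro n
  induction n using Nat.strong_induction_on with
  | _ n ih =>
    match n with
    | 0 => rw [invert, gseq_zero]
    | Nat.succ k =>
      rw [invert, gseq_conv ℓ i hℓ k]
      congr 1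
      · exact hx (k + 1) (by omega)
      · apply Finset.sum_congr rfl
        intro j hj
        simp only [Finset.mem_range] at hj
        rw [hx (j + 1) (by omega), ih (k - j) (by omega)]

theorem stmt_9 (ℓ m : ℕ) (hℓ : 1 ≤ ℓ) (hm : 1 ≤ m) (f₀ : ℕ → ℚ)
    (hf : ∀ j, 1 ≤ j → f₀ j = if ℓ + 1 ≤ j then 1 else 0) (n : ℕ) (hn : 1 ≤ n) :
    (invert^[m] f₀) n
      = ∑ k ∈ Finset.Icc 1 ((n - 1) / ℓ),
          ((n - ℓ * k - 1).choose (k - 1) : ℚ) * (m : ℚ) ^ (k - 1) := by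
  have main : ∀ i : ℕ, ∀ n : ℕ, 1 ≤ n → (invert^[i] f₀) n = gseq ℓ i n := by
    intro i
    induction i with
    | zero =>
      intro n hn
      rw [Function.iterate_zero_apply, hf n hn, gseq_base ℓ hℓ n hn]
    | succ i ih =>
      intro n hn
      rw [Function.iterate_succ_apply']
      exact invert_gseq ℓ i hℓ _ (fun j hj => ih j hj) n
  rw [main m n hn, gseq]
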